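/- Let (X,d) be a countable discrete metric space. Suppose there is a sequence of transition probabilities φ_n on X such that: (1) for every n and every δ>0 there is a number R_{δ,n}>0 such that for every x ∈ X, ∑_{y ∈ B(x,R_{δ,n})} φ_n(x,y) > 1−δ; and (2) for every K>0, lim_{n→∞} sup_{x,y ∈ X, d(x,y)<K} ‖φ_n(x,·) − φ_n(y,·)‖₁ = 0. Then there is a sequence of transition probabilities φ_n' on X such that: (1') for every n there is R_n'>0 with Supp(φ_n'(x,·)) ⊆ B(x,R_n') for all x ∈ X; and (2') for every K>0, lim_{n→∞} sup_{x,y ∈ X, d(x,y)<K} ‖φ_n'(x,·) − φ_n'(y,·)‖₁ = 0. -/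

import Mathlib

noncomputable def l1dist {X : Type*} (μ ν : X → ℝ) : ℝ := ∑' y, |μ y - ν y|

def IsProb {X : Type*} (μ : X → ℝ) : Prop := (∀ x, 0 ≤ μ x) ∧ HasSum μ 1

def IsTransProb {X : Type*} (P : X → X → ℝ) : Prop := ∀ x, IsProb (P x)

noncomputable def mconv {X : Type*} (μ : X → ℝ) (φ : X → X → ℝ) : X → ℝ :=
  fun y => ∑' x, μ x * φ x y

noncomputable def kpow {X : Type*} [DecidableEq X] (P : X → X → ℝ) : ℕ → X → X → ℝ
  | 0 => fun x y => if x = y then 1 else 0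
  | n + 1 => fun x y => ∑' z, kpow P n x z * P z y

theorem stmt9 {X : Type*} [MetricSpace X] [Countable X] [DiscreteTopology X]
    (φ : ℕ → X → X → ℝ) (hφ : ∀ n, IsTransProb (φ n))
    (h1 : ∀ n : ℕ, ∀ δ : ℝ, 0 < δ → ∃ R : ℝ, 0 < R ∧
      ∀ x : X, 1 - δ < ∑' y : Metric.ball x R, φ n x (y : X))
    (h2 : ∀ K : ℝ, 0 < K → ∀ ε : ℝ, 0 < ε → ∃ N : ℕ, ∀ n ≥ N, ∀ x y : X, dist x y < K →
      l1dist (φ n x) (φ n y) < ε) :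
    ∃ ψ : ℕ → X → X → ℝ, (∀ n, IsTransProb (ψ n)) ∧
      (∀ n : ℕ, ∃ R : ℝ, 0 < R ∧ ∀ x y : X, ψ n x y ≠ 0 → y ∈ Metric.ball x R) ∧
      (∀ K : ℝ, 0 < K → ∀ ε : ℝ, 0 < ε → ∃ N : ℕ, ∀ n ≥ N, ∀ x y : X, dist x y < K →
        l1dist (ψ n x) (ψ n y) < ε) := by
  classical
  choose R hRpos hRball using fun n => h1 n (1 / (n + 1 : ℝ)) (by positivity)
  set S : ℕ → X → ℝ := fun n x => ∑' z : Metric.ball x (R n), φ n x (z : X) with hSdef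
  set ψ : ℕ → X → X → ℝ := fun n x y =>
    (if y ∈ Metric.ball x (R n) then φ n x y else 0) +
      (if y = x then 1 - S n x else 0) with hψdef
  have hnn : ∀ n (x y : X), 0 ≤ φ n x y := fun n x => (hφ n x).1
  have hsummable : ∀ n (x : X), Summable (φ n x) := fun n x => (hφ n x).2.summable
  -- indicator form of the truncated kernel
  have hSsum : ∀ n (x : X),
      HasSum (Set.indicator (Metric.ball x (R n)) (φ n x)) (S n x) := by
    intro n x
    exact hasSum_subtype_iff_indicator.1 ((hsummable n x).subtype _).hasSum
  have hcompl : ∀ n (x : X),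
      HasSum (Set.indicator (Metric.ball x (R n))ᶜ (φ n x)) (1 - S n x) := by
    intro n x
    have h2' : HasSum
        (fun y => φ n x y - Set.indicator (Metric.ball x (R n)) (φ n x) y)
        (1 - S n x) := (hφ n x).2.sub (hSsum n x)
    convert h2' using 1
    funext y
    by_cases hy : y ∈ Metric.ball x (R n) <;> simp [Set.indicator, hy]
  have hS1 : ∀ n (x : X), 0 ≤ 1 - S n x := by
    intro n x
    refine (hcompl n x).nonneg fun y => ?_
    exact Set.indicator_nonneg (fun z _ => hnn n x z) y
  have hSδ : ∀ n (x : X), 1 - S n x < 1 / (n + 1 : ℝ) := by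
    intro n x
    have := hRball n x
    linarith
  -- ψ n x sums to 1
  have hψhs : ∀ n (x : X), HasSum (ψ n x) 1 := by
    intro n x
    have heq : Set.indicator (Metric.ball x (R n)) (φ n x)
        = fun y => if y ∈ Metric.ball x (R n) then φ n x y else 0 := by
      funext y
      by_cases hy : y ∈ Metric.ball x (R n)
      · rw [Set.indicator_of_mem hy, if_pos hy]
      · rw [Set.indicator_of_notMem hy, if_neg hy]
    have h1' : HasSum (fun y => if y ∈ Metric.ball x (R n) then φ n x y else 0) (S n x) :=
      heq ▸ hSsum n x
    have h2' : HasSum (fun y : X => if y = x then 1 - S n x else 0) (1 - S n x) :=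
      hasSum_ite_eq x (1 - S n x)
    have := h1'.add h2'
    simpa [hψdef] using this
  have hψnn : ∀ n (x y : X), 0 ≤ ψ n x y := by
    intro n x y
    refine add_nonneg ?_ ?_ <;> split <;>
      first | exact hnn n x y | exact hS1 n x | exact le_rfl
  -- key: l1 distance between ψ n x and φ n x
  have hdiff : ∀ n (x : X),
      HasSum (fun y => |ψ n x y - φ n x y|) (2 * (1 - S n x)) := by
    intro n x
    have hx : x ∈ Metric.ball x (R n) := Metric.mem_ball_self (hRpos n)
    have h := (hcompl n x).add (hasSum_ite_eq x (1 - S n x))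
    have heq : (fun y => |ψ n x y - φ n x y|) =
        fun y => Set.indicator (Metric.ball x (R n))ᶜ (φ n x) y +
          (if y = x then 1 - S n x else 0) := by
      funext y
      simp only [hψdef]
      by_cases hyx : y = x
      · subst hyx
        have hnc : y ∉ (Metric.ball y (R n))ᶜ := fun h => h hx
        rw [if_pos hx, if_pos rfl, Set.indicator_of_notMem hnc,
          show φ n y y + (1 - S n y) - φ n y y = 1 - S n y by ring,
          abs_of_nonneg (hS1 n y), zero_add]
      · by_cases hy : y ∈ Metric.ball x (R n)
        · have hnc : y ∉ (Metric.ball x (R n))ᶜ := fun h => h hy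
          rw [if_pos hy, if_neg hyx, Set.indicator_of_notMem hnc]
          simp
        · rw [if_neg hy, if_neg hyx, Set.indicator_of_mem (Set.mem_compl hy),
            show (0 : ℝ) + 0 - φ n x y = -(φ n x y) by ring, abs_neg,
            abs_of_nonneg (hnn n x y), add_zero]
    rw [heq]
    convert h using 1
    ring
  have hl1ψφ : ∀ n (x : X), l1dist (ψ n x) (φ n x) = 2 * (1 - S n x) := by
    intro n x
    exact (hdiff n x).tsum_eq
  refine ⟨ψ, fun n x => ⟨hψnn n x, hψhs n x⟩, ?_, ?_⟩
  · -- support condition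
    intro n
    refine ⟨R n, hRpos n, fun x y hy => ?_⟩
    by_contra hmem
    apply hy
    have hyx : y ≠ x := fun h => hmem (h ▸ Metric.mem_ball_self (hRpos n))
    simp only [hψdef]
    rw [if_neg hmem, if_neg hyx, add_zero]
  · -- equicontinuity
    intro K hK ε hε
    obtain ⟨N1, hN1⟩ := h2 K hK (ε / 2) (by positivity)
    obtain ⟨N2, hN2⟩ := exists_nat_gt (8 / ε)
    refine ⟨max N1 N2, fun n hn x y hxy => ?_⟩
    have hn1 : N1 ≤ n := le_trans (le_max_left _ _) hn
    have hn2 : (N2 : ℝ) ≤ n := by exact_mod_cast le_trans (le_max_right _ _) hn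
    -- triangle inequality
    have hsumxy : Summable fun z => |φ n x z - φ n y z| :=
      ((hsummable n x).sub (hsummable n y)).abs
    have hRHS : HasSum
        (fun z => |ψ n x z - φ n x z| + (|φ n x z - φ n y z| + |ψ n y z - φ n y z|))
        (2 * (1 - S n x) + (l1dist (φ n x) (φ n y) + 2 * (1 - S n y))) :=
      (hdiff n x).add (hsumxy.hasSum.add (hdiff n y))
    have hLHS : Summable fun z => |ψ n x z - ψ n y z| :=
      (((hψhs n x).summable).sub ((hψhs n y).summable)).abs
    have htri : l1dist (ψ n x) (ψ n y) ≤
        2 * (1 - S n x) + (l1dist (φ n x) (φ n y) + 2 * (1 - S n y)) := by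
      rw [show (2 * (1 - S n x) + (l1dist (φ n x) (φ n y) + 2 * (1 - S n y))) =
        ∑' z, (|ψ n x z - φ n x z| + (|φ n x z - φ n y z| + |ψ n y z - φ n y z|))
        from hRHS.tsum_eq.symm]
      refine Summable.tsum_le_tsum (fun z => ?_) hLHS hRHS.summable
      calc |ψ n x z - ψ n y z| ≤ |ψ n x z - φ n x z| + |φ n x z - ψ n y z| :=
            abs_sub_le _ _ _
        _ ≤ |ψ n x z - φ n x z| + (|φ n x z - φ n y z| + |φ n y z - ψ n y z|) := by
            gcongr; exact abs_sub_le _ _ _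
        _ = |ψ n x z - φ n x z| + (|φ n x z - φ n y z| + |ψ n y z - φ n y z|) := by
            rw [abs_sub_comm (φ n y z)]
    have hδn : 1 / (n + 1 : ℝ) < ε / 8 := by
      have h8 : 8 / ε < (n : ℝ) + 1 := lt_of_lt_of_le hN2 (by linarith)
      rw [div_lt_iff₀ hε] at h8
      rw [div_lt_div_iff₀ (by positivity) (by norm_num : (0:ℝ) < 8)]
      nlinarith
    have hbx : 2 * (1 - S n x) < ε / 4 := by
      have := hSδ n x; linarith
    have hby : 2 * (1 - S n y) < ε / 4 := by
      have := hSδ n y; linarith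
    have hφb : l1dist (φ n x) (φ n y) < ε / 2 := hN1 n hn1 x y hxy
    linarith [htri]
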